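/- For every real α ≥ 0 and every real ξ, the identity e^{−ξ²} = −2α ξ² M(−α/2 + 1/2, 3/2, −ξ²) M(−α/2 + 1, 3/2, −ξ²) + M(−α/2, 1/2, −ξ²) M(−α/2 + 1/2, 1/2, −ξ²) holds. -/

import Mathlib

/-- Kummer confluent hypergeometric function `M(a,b,z) = ∑ (a)ₛ/((b)ₛ s!) zˢ`. -/
noncomputable def kummerM (a b z : ℝ) : ℝ :=
  ∑' n : ℕ, ((ascPochhammer ℝ n).eval a / ((ascPochhammer ℝ n).eval b * n.factorial)) * z ^ n

/-- Error function `erf z = (2/√π) ∫₀ᶻ e^{-u²} du`. -/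
noncomputable def erf (z : ℝ) : ℝ := (2 / Real.sqrt Real.pi) * ∫ u in (0:ℝ)..z, Real.exp (-u^2)

/-- Complementary error function. -/
noncomputable def erfc (z : ℝ) : ℝ := 1 - erf z

/-- Repeated integrals of the complementary error function:
`i⁰erfc = erfc`, `iⁿ⁺¹erfc z = ∫_z^∞ iⁿerfc t dt`. -/
noncomputable def inerfc : ℕ → ℝ → ℝ
  | 0 => erfc
  | (n+1) => fun z => ∫ t in Set.Ici z, inerfc n t

section KummerAuxSection
open PowerSeries Finset

namespace KummerAux

/-! ### Pochhammer and factorial auxiliary lemmas -/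

lemma asc_succ_left_eval' (x : ℝ) (n : ℕ) :
    (ascPochhammer ℝ (n+1)).eval x = x * (ascPochhammer ℝ n).eval (x+1) := by
  rw [ascPochhammer_succ_left]
  simp [Polynomial.eval_comp]

lemma fact1_cast (n : ℕ) : ((2*n+1).factorial : ℝ) = (2*n+1) * ((2*n).factorial : ℝ) := by
  rw [Nat.factorial_succ]; push_cast; ring

lemma fact2_cast (n : ℕ) :
    ((2*(n+1)).factorial : ℝ) = ((2*n+2) * (2*n+1)) * ((2*n).factorial : ℝ) := by
  rw [show 2*(n+1) = (2*n+1)+1 by ring, Nat.factorial_succ]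
  push_cast
  rw [fact1_cast]; ring

lemma fact3_cast (n : ℕ) :
    ((2*(n+1)+1).factorial : ℝ) = ((2*n+3) * (2*n+2) * (2*n+1)) * ((2*n).factorial : ℝ) := by
  rw [show 2*(n+1)+1 = (2*n+1+1)+1 by ring, Nat.factorial_succ, Nat.factorial_succ]
  push_cast
  rw [fact1_cast]; ring

lemma asc_half (n : ℕ) :
    (ascPochhammer ℝ n).eval (1/2) * (n.factorial : ℝ) = (2*n).factorial / 4^n := by
  induction n with
  | zero => simp
  | succ n ih =>
    have h1 : ((2*(n+1)).factorial : ℝ) = (2*n+2) * ((2*n+1) * ((2*n).factorial : ℝ)) := by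
      rw [fact2_cast]; ring
    rw [ascPochhammer_succ_eval, Nat.factorial_succ, h1]
    push_cast
    field_simp at ih ⊢
    rw [← ih]; ring

lemma asc_3half (n : ℕ) :
    (ascPochhammer ℝ n).eval (3/2) * (n.factorial : ℝ) = (2*n+1).factorial / 4^n := by
  induction n with
  | zero => simp
  | succ n ih =>
    have h1 : ((2*(n+1)+1).factorial : ℝ) = (2*n+3) * ((2*n+2) * ((2*n+1).factorial : ℝ)) := by
      rw [fact3_cast, fact1_cast]; ring
    rw [ascPochhammer_succ_eval, Nat.factorial_succ, h1]
    push_cast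
    field_simp at ih ⊢
    rw [← ih]; ring

lemma asc_abs_le (x : ℝ) (n : ℕ) :
    |(ascPochhammer ℝ n).eval x| ≤ (|x|+1)^n * n.factorial := by
  induction n with
  | zero => simp
  | succ n ih =>
    rw [ascPochhammer_succ_eval, abs_mul, Nat.factorial_succ]
    have h2 : |x + (n:ℝ)| ≤ (|x|+1) * (n+1) := by
      have h := abs_add_le x (n:ℝ)
      have h' : |(n:ℝ)| = (n:ℝ) := abs_of_nonneg (by positivity)
      nlinarith [abs_nonneg x]
    have key := mul_le_mul ih h2 (abs_nonneg _) (by positivity)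
    refine le_trans key (le_of_eq ?_)
    push_cast
    ring

/-! ### The power series -/

/-- coefficients of `M(x, 1/2, ·)` -/
noncomputable def cA (x : ℝ) (n : ℕ) : ℝ := 4^n * (ascPochhammer ℝ n).eval x / (2*n).factorial
/-- coefficients of `M(x, 3/2, ·)` -/
noncomputable def cB (x : ℝ) (n : ℕ) : ℝ := 4^n * (ascPochhammer ℝ n).eval x / (2*n+1).factorial

noncomputable def PA (x : ℝ) : PowerSeries ℝ := PowerSeries.mk (cA x)
noncomputable def PB (x : ℝ) : PowerSeries ℝ := PowerSeries.mk (cB x)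

/-- contiguous relation (1):  `M(x,1/2,·)' = 2x · M(x+1,3/2,·)` -/
lemma hDP (x : ℝ) : d⁄dX ℝ (PA x) = C (2*x) * PB (x+1) := by
  ext n
  rw [coeff_derivative, PA, PB, coeff_mk, coeff_C_mul, coeff_mk, cA, cB,
    asc_succ_left_eval', fact2_cast, fact1_cast]
  have h2 : ((2*n).factorial : ℝ) ≠ 0 := by positivity
  field_simp
  ring

/-- contiguous relation (2):  `M(x,1/2,t) = M(x,3/2,t) + 2t·M(x,3/2,t)'` -/
lemma hQrel (x : ℝ) : PA x = PB x + C 2 * (X * d⁄dX ℝ (PB x)) := by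
  ext n
  rw [map_add, coeff_C_mul, PA, PB, coeff_mk]
  cases n with
  | zero =>
    rw [coeff_zero_X_mul, coeff_mk]
    simp [cA, cB]
  | succ n =>
    rw [coeff_succ_X_mul, coeff_derivative, coeff_mk]
    rw [cA, cB, fact2_cast, fact3_cast]
    have h2 : ((2*n).factorial : ℝ) ≠ 0 := by positivity
    field_simp
    ring

/-- contiguous relation (3):  `M(x,1/2,·)' = M(x,1/2,·) + (2x-1) M(x,3/2,·)` -/
lemma hDQ (x : ℝ) : d⁄dX ℝ (PA x) = PA x + C (2*x-1) * PB x := by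
  ext n
  rw [coeff_derivative, map_add, coeff_C_mul, PA, PB, coeff_mk, coeff_mk, coeff_mk,
    cA, cA, cB, ascPochhammer_succ_eval, fact2_cast, fact1_cast]
  have h2 : ((2*n).factorial : ℝ) ≠ 0 := by positivity
  field_simp
  ring

/-- contiguous relation (4):
`M(x,1/2,t) = M(x+1,3/2,t) + 2t·M(x+1,3/2,t)' - 2t·M(x+1,3/2,t)` -/
lemma hPrel (x : ℝ) :
    PA x = PB (x+1) + C 2 * (X * d⁄dX ℝ (PB (x+1))) - C 2 * (X * PB (x+1)) := by
  ext n
  rw [map_sub, map_add, coeff_C_mul, coeff_C_mul, PA, PB, coeff_mk]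
  cases n with
  | zero =>
    rw [coeff_zero_X_mul, coeff_zero_X_mul, coeff_mk]
    simp [cA, cB]
  | succ n =>
    rw [coeff_succ_X_mul, coeff_succ_X_mul, coeff_derivative, coeff_mk, coeff_mk]
    rw [cA, cB, cB, asc_succ_left_eval', ascPochhammer_succ_eval, fact2_cast, fact3_cast,
      fact1_cast]
    have h2 : ((2*n).factorial : ℝ) ≠ 0 := by positivity
    field_simp
    ring

/-- the Wronskian-type combination -/
noncomputable def V (a : ℝ) : PowerSeries ℝ :=
  PA a * PA (a+1/2) - C 2 * C (2*a) * (X * (PB (a+1/2) * PB (a+1)))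

lemma hDV (a : ℝ) : d⁄dX ℝ (V a) = V a := by
  have h3 : d⁄dX ℝ (PA (a+1/2)) = PA (a+1/2) + C (2*a) * PB (a+1/2) := by
    have := hDQ (a+1/2)
    rw [show 2*(a+1/2)-1 = 2*a by ring] at this
    exact this
  have h1 := hDP a
  have h2 := hQrel (a+1/2)
  have h4 := hPrel a
  rw [V, map_sub]
  rw [Derivation.leibniz, Derivation.leibniz, Derivation.leibniz, Derivation.leibniz,
    Derivation.leibniz]
  rw [derivative_X, derivative_C, derivative_C]
  simp only [smul_eq_mul, mul_zero, zero_mul, add_zero, zero_add, mul_one, smul_zero]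
  rw [h1, h3, h2, h4, show (C 2 : PowerSeries ℝ) = 2 from map_ofNat _ 2]
  ring

lemma coeffV (a : ℝ) (n : ℕ) : coeff n (V a) = 1 / n.factorial := by
  induction n with
  | zero =>
    rw [V]
    simp only [map_sub, coeff_zero_eq_constantCoeff, map_mul, constantCoeff_X]
    simp [PA, cA, constantCoeff_mk]
  | succ n ih =>
    have h := congrArg (coeff n) (hDV a)
    rw [coeff_derivative] at h
    rw [ih] at h
    have hn : ((n:ℝ)+1) ≠ 0 := by positivity
    rw [Nat.factorial_succ]
    push_cast
    field_simp at h ⊢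
    linarith [h]

/-! ### Summability and `tsum` identification -/

lemma kummer_eq_A (x z : ℝ) : kummerM x (1/2) z = ∑' n, cA x n * z^n := by
  rw [kummerM]
  refine tsum_congr fun n => ?_
  rw [asc_half n, cA]
  have h2 : ((2*n).factorial : ℝ) ≠ 0 := by positivity
  have h4 : (4:ℝ)^n ≠ 0 := by positivity
  congr 1
  field_simp

lemma kummer_eq_B (x z : ℝ) : kummerM x (3/2) z = ∑' n, cB x n * z^n := by
  rw [kummerM]
  refine tsum_congr fun n => ?_
  rw [asc_3half n, cB]
  have h2 : ((2*n+1).factorial : ℝ) ≠ 0 := by positivity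
  have h4 : (4:ℝ)^n ≠ 0 := by positivity
  congr 1
  field_simp

lemma factsq_le_A (n : ℕ) : ((n.factorial : ℝ) * n.factorial : ℝ) ≤ ((2*n).factorial : ℝ) := by
  have h := Nat.factorial_mul_factorial_dvd_factorial_add n n
  have h2 : n.factorial * n.factorial ≤ (n+n).factorial := Nat.le_of_dvd (Nat.factorial_pos _) h
  have h3 : (n+n) = 2*n := by ring
  rw [h3] at h2
  exact_mod_cast h2

lemma factsq_le_B (n : ℕ) : ((n.factorial : ℝ) * n.factorial : ℝ) ≤ ((2*n+1).factorial : ℝ) := by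
  refine le_trans (factsq_le_A n) ?_
  exact_mod_cast Nat.factorial_le (Nat.le_succ _)

lemma summable_gen (x z : ℝ) (d : ℕ → ℕ)
    (hd : ∀ n, ((n.factorial : ℝ) * n.factorial : ℝ) ≤ (d n : ℝ)) :
    Summable fun n => ‖4^n * (ascPochhammer ℝ n).eval x / (d n : ℝ) * z^n‖ := by
  refine Summable.of_nonneg_of_le (fun n => norm_nonneg _) (fun n => ?_)
    (Real.summable_pow_div_factorial (4*(|x|+1)*|z|))
  have hdpos : (0:ℝ) < (d n : ℝ) := lt_of_lt_of_le (by positivity) (hd n)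
  have hb := asc_abs_le x n
  have e1 : ‖4^n * (ascPochhammer ℝ n).eval x / (d n : ℝ) * z^n‖
      = (4^n * |(ascPochhammer ℝ n).eval x| * |z|^n) / (d n : ℝ) := by
    rw [Real.norm_eq_abs, abs_mul, abs_div, abs_mul, abs_pow, abs_pow,
      abs_of_nonneg (le_of_lt hdpos), abs_of_nonneg (by norm_num : (0:ℝ) ≤ 4)]
    ring
  rw [e1]
  have step1 : (4^n * |(ascPochhammer ℝ n).eval x| * |z|^n) / (d n : ℝ)
      ≤ (4^n * ((|x|+1)^n * n.factorial) * |z|^n) / ((n.factorial : ℝ) * n.factorial) := by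
    gcongr
    exact hd n
  refine le_trans step1 (le_of_eq ?_)
  have hf : (n.factorial : ℝ) ≠ 0 := by positivity
  rw [mul_pow, mul_pow]
  field_simp

lemma summable_A (x z : ℝ) : Summable fun n => ‖cA x n * z^n‖ := by
  have := summable_gen x z (fun n => (2*n).factorial) factsq_le_A
  simpa [cA] using this

lemma summable_B (x z : ℝ) : Summable fun n => ‖cB x n * z^n‖ := by
  have := summable_gen x z (fun n => (2*n+1).factorial) factsq_le_B
  simpa [cB] using this

/-! ### Cauchy products -/

lemma prod_term (c d : ℕ → ℝ) (z : ℝ) (n : ℕ) :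
    (∑ k ∈ range (n+1), c k * z^k * (d (n-k) * z^(n-k)))
      = (coeff n (PowerSeries.mk c * PowerSeries.mk d)) * z^n := by
  rw [coeff_mul, Finset.Nat.sum_antidiagonal_eq_sum_range_succ_mk, sum_mul]
  refine Finset.sum_congr rfl fun k hk => ?_
  have hk' : k ≤ n := Nat.lt_succ_iff.mp (mem_range.mp hk)
  rw [coeff_mk, coeff_mk,
    show c k * z^k * (d (n-k) * z^(n-k)) = c k * d (n-k) * (z^k * z^(n-k)) from by ring,
    ← pow_add, Nat.add_sub_cancel' hk']

lemma tsum_prod_eq (c d : ℕ → ℝ) (z : ℝ)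
    (hc : Summable fun n => ‖c n * z^n‖) (hd : Summable fun n => ‖d n * z^n‖) :
    (∑' n, c n * z^n) * (∑' n, d n * z^n)
      = ∑' n, (coeff n (PowerSeries.mk c * PowerSeries.mk d)) * z^n := by
  rw [tsum_mul_tsum_eq_tsum_sum_range_of_summable_norm hc hd]
  exact tsum_congr fun n => prod_term c d z n

lemma summable_prod (c d : ℕ → ℝ) (z : ℝ)
    (hc : Summable fun n => ‖c n * z^n‖) (hd : Summable fun n => ‖d n * z^n‖) :
    Summable fun n => (coeff n (PowerSeries.mk c * PowerSeries.mk d)) * z^n := by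
  refine ((summable_norm_sum_mul_range_of_summable_norm hc hd).of_norm).congr fun n => ?_
  exact prod_term c d z n

lemma summable_coeff_X_mul (f : PowerSeries ℝ) (z : ℝ)
    (hf : Summable fun n => coeff n f * z^n) :
    Summable fun n => coeff n (X * f) * z^n := by
  refine (summable_nat_add_iff 1).mp ?_
  refine (hf.mul_left z).congr fun n => ?_
  rw [coeff_succ_X_mul, pow_succ]
  ring

lemma tsum_coeff_X_mul (f : PowerSeries ℝ) (z : ℝ)
    (hf : Summable fun n => coeff n f * z^n) :
    ∑' n, coeff n (X * f) * z^n = z * ∑' n, coeff n f * z^n := by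
  rw [Summable.tsum_eq_zero_add (summable_coeff_X_mul f z hf)]
  rw [coeff_zero_X_mul, zero_mul, zero_add, ← tsum_mul_left]
  exact tsum_congr fun n => by rw [coeff_succ_X_mul, pow_succ]; ring

/-! ### The key identity -/

theorem kummer_key (a z : ℝ) :
    Real.exp z = -(4*a) * z * (kummerM (a+1/2) (3/2) z * kummerM (a+1) (3/2) z)
      + kummerM a (1/2) z * kummerM (a+1/2) (1/2) z := by
  have hPQ : kummerM a (1/2) z * kummerM (a+1/2) (1/2) z
      = ∑' n, coeff n (PA a * PA (a+1/2)) * z^n := by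
    rw [kummer_eq_A a z, kummer_eq_A (a+1/2) z]
    simp only [PA]
    exact tsum_prod_eq _ _ z (summable_A a z) (summable_A (a+1/2) z)
  have hRS : kummerM (a+1/2) (3/2) z * kummerM (a+1) (3/2) z
      = ∑' n, coeff n (PB (a+1/2) * PB (a+1)) * z^n := by
    rw [kummer_eq_B (a+1/2) z, kummer_eq_B (a+1) z]
    simp only [PB]
    exact tsum_prod_eq _ _ z (summable_B (a+1/2) z) (summable_B (a+1) z)
  have sPQ : Summable fun n => coeff n (PA a * PA (a+1/2)) * z^n := by
    simp only [PA]
    exact summable_prod _ _ z (summable_A a z) (summable_A (a+1/2) z)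
  have sRS : Summable fun n => coeff n (PB (a+1/2) * PB (a+1)) * z^n := by
    simp only [PB]
    exact summable_prod _ _ z (summable_B (a+1/2) z) (summable_B (a+1) z)
  have sXRS := summable_coeff_X_mul _ z sRS
  have main : Real.exp z = (∑' n, coeff n (PA a * PA (a+1/2)) * z^n)
      - (2*(2*a)) * (z * ∑' n, coeff n (PB (a+1/2) * PB (a+1)) * z^n) := by
    rw [Real.exp_eq_exp_ℝ, NormedSpace.exp_eq_tsum_div]
    calc (∑' n:ℕ, z^n/(n.factorial:ℝ)) = ∑' n, coeff n (V a) * z^n :=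
          tsum_congr fun n => by rw [coeffV]; ring
    _ = ∑' n, (coeff n (PA a * PA (a+1/2)) * z^n
          - (2*(2*a)) * (coeff n (X * (PB (a+1/2) * PB (a+1))) * z^n)) := by
        refine tsum_congr fun n => ?_
        rw [V, map_sub, ← map_mul, coeff_C_mul]
        ring
    _ = (∑' n, coeff n (PA a * PA (a+1/2)) * z^n)
          - ∑' n, (2*(2*a)) * (coeff n (X * (PB (a+1/2) * PB (a+1))) * z^n) :=
        Summable.tsum_sub sPQ (sXRS.mul_left _)
    _ = (∑' n, coeff n (PA a * PA (a+1/2)) * z^n)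
          - (2*(2*a)) * (z * ∑' n, coeff n (PB (a+1/2) * PB (a+1)) * z^n) := by
        rw [tsum_mul_left, tsum_coeff_X_mul _ z sRS]
  rw [hPQ, hRS]
  linear_combination main

end KummerAux

end KummerAuxSection

/-- The product identity
`e^{-ξ²} = -2αξ² M(-α/2+1/2,3/2,-ξ²) M(-α/2+1,3/2,-ξ²) + M(-α/2,1/2,-ξ²) M(-α/2+1/2,1/2,-ξ²)`. -/
theorem kummer_product_identity (α : ℝ) (hα : 0 ≤ α) (ξ : ℝ) :
    Real.exp (-ξ ^ 2) =
      -2 * α * ξ ^ 2 * kummerM (-α / 2 + 1 / 2) (3 / 2) (-ξ ^ 2) *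
          kummerM (-α / 2 + 1) (3 / 2) (-ξ ^ 2) +
        kummerM (-α / 2) (1 / 2) (-ξ ^ 2) * kummerM (-α / 2 + 1 / 2) (1 / 2) (-ξ ^ 2) := by
  have h := KummerAux.kummer_key (-α / 2) (-ξ ^ 2)
  linear_combination h
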